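/- Orthogonal return decomposition (Lemma return_decomp): Let β ≥ 0, let r be a bounded measurable reward, and let π be a Markov policy (with kernels admitting ν-densities with bounded measurable log-densities when β > 0). For a trajectory τ = (s₁,a₁,…,s_T,a_T), define G^π_r(τ) := Σ_{t=1}^T ( r_t(s_t,a_t) − β log π_t(a_t|s_t) ), and for t = 0,…,T−1 define δ^π_{t,r} := V^π_{t+1,r}(s_{t+1}) − (P_t V^π_{t+1,r})(s_t,a_t), where for t = 0 one sets (P₀V^π_{1,r})(s₀,a₀) := ∫ V^π_{1,r} dP₀ (a constant). Then: (1) G^π_r(τ) − J(r,π) = Σ_{t=1}^T A^π_{t,r}(s_t,a_t) + Σ_{t=0}^{T−1} δ^π_{t,r} identically in τ; (2) for every s, ∫ A^π_{t,r}(s,a) π_t(da|s) = 0, and for every (s,a), ∫ ( V^π_{t+1,r}(s′) − (P_tV^π_{t+1,r})(s,a) ) P_t(ds′|s,a) = 0; (3) for any second policy π′, the 2T random variables A^π_{1,r}(s_1,a_1),…,A^π_{T,r}(s_T,a_T), δ^{π′}_{0,r},…,δ^{π′}_{T−1,r} are pairwise orthogonal in L²(P^π). -/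

import Mathlib

open MeasureTheory ProbabilityTheory Real
open scoped ENNReal RealInnerProductSpace

noncomputable section

namespace IRL

variable {S A : Type*} [MeasurableSpace S] [MeasurableSpace A]

/-- A reward tuple `(r_t)` of bounded measurable functions. -/
def IsBddReward (r : ℕ → S → A → ℝ) : Prop :=
  ∀ t, Measurable (fun q : S × A => r t q.1 q.2) ∧ ∃ C, ∀ s a, |r t s a| ≤ C

/-- `p` is a family of `ν`-probability densities of a Markov policy. -/
def IsPolicyDensity (ν : Measure A) (p : ℕ → S → A → ℝ) : Prop :=
  (∀ t, Measurable (fun q : S × A => p t q.1 q.2)) ∧ (∀ t s a, 0 ≤ p t s a) ∧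
    (∀ t s, ∫ a, p t s a ∂ν = 1)

/-- the log-densities `log π_t` are bounded (in particular the densities are positive). -/
def HasBddLogDensity (p : ℕ → S → A → ℝ) : Prop :=
  ∀ t, (∀ s a, 0 < p t s a) ∧ ∃ C, ∀ s a, |Real.log (p t s a)| ≤ C

variable (T : ℕ) (P : ℕ → Kernel (S × A) S) (ν : Measure A)

/-- Soft-optimal value function `V*_{t,r}` (backward recursion, `V* t ≡ 0` for `t > T`). -/
def Vstar (β : ℝ) (r : ℕ → S → A → ℝ) (t : ℕ) (s : S) : ℝ :=
  if T < t then 0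
  else β * Real.log (∫ a, Real.exp ((r t s a + ∫ s', Vstar β r (t + 1) s' ∂(P t (s, a))) / β) ∂ν)
termination_by T + 1 - t
decreasing_by omega

/-- Soft-optimal state-action value `Q*_{t,r}`. -/
def Qstar (β : ℝ) (r : ℕ → S → A → ℝ) (t : ℕ) (s : S) (a : A) : ℝ :=
  r t s a + ∫ s', Vstar T P ν β r (t + 1) s' ∂(P t (s, a))

/-- `ν`-density of the soft-optimal policy `π*_r`. -/
def piStar (β : ℝ) (r : ℕ → S → A → ℝ) (t : ℕ) (s : S) (a : A) : ℝ :=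
  Real.exp ((Qstar T P ν β r t s a - Vstar T P ν β r t s) / β)

/-- Value function `V^π_{t,r}` of a policy given by densities `p` (with `β = 0` this is the
unregularized value function `V^{π,0}`). -/
def Vpol (β : ℝ) (p r : ℕ → S → A → ℝ) (t : ℕ) (s : S) : ℝ :=
  if T < t then 0
  else ∫ a,
    (r t s a + (∫ s', Vpol β p r (t + 1) s' ∂(P t (s, a))) - β * Real.log (p t s a)) * p t s a ∂ν
termination_by T + 1 - t
decreasing_by omega

/-- `Q^π_{t,r}` for a policy given by densities `p`. -/
def Qpol (β : ℝ) (p r : ℕ → S → A → ℝ) (t : ℕ) (s : S) (a : A) : ℝ :=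
  r t s a + ∫ s', Vpol T P ν β p r (t + 1) s' ∂(P t (s, a))

/-- Regularized advantage `A^π_{t,r}(s,a) = Q^π - V^π - β log π_t(a|s)`. -/
def Apol (β : ℝ) (p r : ℕ → S → A → ℝ) (t : ℕ) (s : S) (a : A) : ℝ :=
  Qpol T P ν β p r t s a - Vpol T P ν β p r t s - β * Real.log (p t s a)

variable (P0 : Measure S)

/-- Optimal value `J*(r) = ∫ V*_{1,r} dP₀`. -/
def Jstar (β : ℝ) (r : ℕ → S → A → ℝ) : ℝ := ∫ s, Vstar T P ν β r 1 s ∂P0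

/-- Expected (regularized) return `J(r,π)` of a density policy. -/
def Jpol (β : ℝ) (p r : ℕ → S → A → ℝ) : ℝ := ∫ s, Vpol T P ν β p r 1 s ∂P0

/-- Iterated expectation, from time `t` in state `s`, of a trajectory functional `g` under a
(kernel) Markov policy `π`; coordinates of the trajectory outside `{1,…,T}` are irrelevant
junk values. -/
def polExp [Nonempty S] [Nonempty A] (pol : ℕ → Kernel S A) (g : (ℕ → S × A) → ℝ) (t : ℕ)
    (s : S) : ℝ :=
  if T < t then g (fun _ => (Classical.arbitrary S, Classical.arbitrary A))
  else ∫ a, ∫ s', polExp pol (fun τ => g (Function.update τ t (s, a))) (t + 1) s' ∂(P t (s, a))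
    ∂(pol t s)
termination_by T + 1 - t
decreasing_by omega

/-- `μ` is the trajectory law `P^π` of the Markov policy `π` (with initial distribution `P₀`),
characterized through integrals of all bounded measurable trajectory functionals. -/
def IsTrajLaw [Nonempty S] [Nonempty A] (pol : ℕ → Kernel S A) (μ : Measure (ℕ → S × A)) : Prop :=
  IsProbabilityMeasure μ ∧
    ∀ g : (ℕ → S × A) → ℝ, Measurable g → (∃ C, ∀ τ, |g τ| ≤ C) →
      ∫ τ, g τ ∂μ = ∫ s, polExp T P pol g 1 s ∂P0

/-- The kernel `s ↦ p t s ⬝ ν` of a policy given by densities. -/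
def densKernel [IsFiniteMeasure ν] (p : ℕ → S → A → ℝ) (t : ℕ) : Kernel S A :=
  Kernel.withDensity (Kernel.const S ν) fun s a => ENNReal.ofReal (p t s a)

open Classical in
/-- Kullback–Leibler divergence `∫ log (dμ/dμ') dμ` if `μ ≪ μ'` (`∞` otherwise). -/
def KL {X : Type*} [MeasurableSpace X] (μ μ' : Measure X) : ℝ≥0∞ :=
  if μ ≪ μ' ∧ Integrable (fun x => Real.log (μ.rnDeriv μ' x).toReal) μ then
    ENNReal.ofReal (∫ x, Real.log (μ.rnDeriv μ' x).toReal ∂μ)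
  else ⊤

/-- Squared Hellinger distance, computed with the dominating measure `μ + μ'`. -/
def sqHellinger {X : Type*} [MeasurableSpace X] (μ μ' : Measure X) : ℝ :=
  ∫ x, (Real.sqrt ((μ.rnDeriv (μ + μ') x).toReal)
      - Real.sqrt ((μ'.rnDeriv (μ + μ') x).toReal)) ^ 2 ∂(μ + μ')

/-- Second directional derivative. -/
def D2 {E : Type*} [NormedAddCommGroup E] [NormedSpace ℝ E] (F : E → ℝ) (θ ξ ζ : E) : ℝ :=
  fderiv ℝ (fun x => fderiv ℝ F x ζ) θ ξ

/-- Third directional derivative. -/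
def D3 {E : Type*} [NormedAddCommGroup E] [NormedSpace ℝ E] (F : E → ℝ) (θ ξ ζ ω : E) : ℝ :=
  fderiv ℝ (fun x => D2 F x ζ ω) θ ξ

end IRL

set_option linter.unusedSectionVars false

namespace IRLAux

open IRL

variable {S A : Type*} [MeasurableSpace S] [MeasurableSpace A]

section Meas

variable {X : Type*} [MeasurableSpace X] {μ : Measure X}

lemma integrable_of_bdd [IsFiniteMeasure μ] {f : X → ℝ} (hm : Measurable f) {C : ℝ}
    (hb : ∀ x, |f x| ≤ C) : Integrable f μ :=
  Integrable.mono' (integrable_const C) hm.aestronglyMeasurable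
    (Filter.Eventually.of_forall fun x => by simpa [Real.norm_eq_abs] using hb x)

lemma abs_integral_le_of_bdd [IsProbabilityMeasure μ] {f : X → ℝ} {C : ℝ}
    (hb : ∀ x, |f x| ≤ C) : |∫ x, f x ∂μ| ≤ C := by
  have h := norm_integral_le_of_norm_le_const (μ := μ) (f := f) (C := C)
    (Filter.Eventually.of_forall fun x => by simpa [Real.norm_eq_abs] using hb x)
  simpa [Real.norm_eq_abs, measure_univ] using h

end Meas

section Dens

variable {ν : Measure A} [IsFiniteMeasure ν] {p : ℕ → S → A → ℝ}

lemma p_meas (hp : IsPolicyDensity ν p) (t : ℕ) (s : S) : Measurable (fun a => p t s a) :=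
  (hp.1 t).comp measurable_prodMk_left

lemma p_integrable (hp : IsPolicyDensity ν p) (t : ℕ) (s : S) :
    Integrable (fun a => p t s a) ν := by
  by_contra h
  have h0 := MeasureTheory.integral_undef h
  have h1 := hp.2.2 t s
  rw [h0] at h1
  exact one_ne_zero h1.symm

lemma densKernel_apply (hp : IsPolicyDensity ν p) (t : ℕ) (s : S) :
    densKernel ν p t s = ν.withDensity (fun a => ENNReal.ofReal (p t s a)) := by
  rw [IRL.densKernel, Kernel.withDensity_apply, Kernel.const_apply]
  exact ENNReal.measurable_ofReal.comp (hp.1 t)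

lemma densKernel_prob (hp : IsPolicyDensity ν p) (t : ℕ) (s : S) :
    IsProbabilityMeasure (densKernel ν p t s) := by
  constructor
  rw [densKernel_apply hp, MeasureTheory.withDensity_apply _ MeasurableSet.univ,
    Measure.restrict_univ,
    ← MeasureTheory.ofReal_integral_eq_lintegral_ofReal (p_integrable hp t s)
      (Filter.Eventually.of_forall fun a => hp.2.1 t s a),
    hp.2.2 t s, ENNReal.ofReal_one]

lemma integral_densKernel (hp : IsPolicyDensity ν p) (t : ℕ) (s : S) (f : A → ℝ) :
    ∫ a, f a ∂(densKernel ν p t s) = ∫ a, p t s a * f a ∂ν := by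
  rw [densKernel_apply hp]
  have h1 : (fun a => ENNReal.ofReal (p t s a)) = fun a => ((p t s a).toNNReal : ℝ≥0∞) := rfl
  rw [h1, integral_withDensity_eq_integral_smul
    (f := fun a => (p t s a).toNNReal)
    (measurable_real_toNNReal.comp (p_meas hp t s)) f]
  refine integral_congr_ae (Filter.Eventually.of_forall fun a => ?_)
  simp [NNReal.smul_def, Real.coe_toNNReal _ (hp.2.1 t s a)]

end Dens


section Vfacts

variable {T : ℕ} {P : ℕ → Kernel (S × A) S} [∀ t, IsMarkovKernel (P t)]
  {ν : Measure A} [IsFiniteMeasure ν]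
  {β : ℝ} {r p : ℕ → S → A → ℝ}

lemma log_term_bdd (hβ : 0 ≤ β) (hlog : 0 < β → HasBddLogDensity p) (t : ℕ) :
    ∃ C, ∀ s a, |β * Real.log (p t s a)| ≤ C := by
  rcases eq_or_lt_of_le hβ with h | h
  · exact ⟨0, fun s a => by simp [← h]⟩
  · obtain ⟨C, hC⟩ := (hlog h t).2
    exact ⟨β * C, fun s a => by
      rw [abs_mul, abs_of_pos h]
      exact mul_le_mul_of_nonneg_left (hC s a) h.le⟩

lemma Vpol_meas_bdd (hr : IsBddReward r) (hp : IsPolicyDensity ν p)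
    (hL : ∀ t, ∃ C, ∀ s a, |β * Real.log (p t s a)| ≤ C) (t : ℕ) :
    Measurable (Vpol T P ν β p r t) ∧ ∃ C, ∀ s, |Vpol T P ν β p r t s| ≤ C := by
  suffices h : ∀ n t, T + 1 - t ≤ n →
      Measurable (Vpol T P ν β p r t) ∧ ∃ C, ∀ s, |Vpol T P ν β p r t s| ≤ C from
    h (T + 1) t (by omega)
  intro n
  induction n with
  | zero =>
    intro t ht
    have h0 : Vpol T P ν β p r t = fun _ => 0 := funext fun s => by
      rw [Vpol, if_pos (by omega)]
    rw [h0]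
    exact ⟨measurable_const, 0, fun s => by simp⟩
  | succ n ih =>
    intro t ht
    by_cases hTt : T < t
    · have h0 : Vpol T P ν β p r t = fun _ => 0 := funext fun s => by rw [Vpol, if_pos hTt]
      rw [h0]
      exact ⟨measurable_const, 0, fun s => by simp⟩
    · obtain ⟨hm1, C1, hC1⟩ := ih (t + 1) (by omega)
      -- PV measurable and bounded
      have hPVm : Measurable fun q : S × A => ∫ s', Vpol T P ν β p r (t + 1) s' ∂(P t q) :=
        (MeasureTheory.StronglyMeasurable.integral_kernel_prod_right'
          (hm1.comp measurable_snd).stronglyMeasurable).measurable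
      have hPVb : ∀ q : S × A, |∫ s', Vpol T P ν β p r (t + 1) s' ∂(P t q)| ≤ C1 :=
        fun q => abs_integral_le_of_bdd hC1
      obtain ⟨Cr, hCr⟩ := (hr t).2
      obtain ⟨CL, hCL⟩ := hL t
      -- the inner function h (before multiplying by p)
      set h : S × A → ℝ := fun q =>
        r t q.1 q.2 + (∫ s', Vpol T P ν β p r (t + 1) s' ∂(P t q)) - β * Real.log (p t q.1 q.2)
        with hh
      have hhm : Measurable h := (((hr t).1).add hPVm).sub
        ((measurable_const.mul ((hp.1 t).log)))
      have hhb : ∀ q, |h q| ≤ Cr + C1 + CL := fun q => by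
        calc |h q| ≤ |r t q.1 q.2 + ∫ s', Vpol T P ν β p r (t + 1) s' ∂(P t q)|
              + |β * Real.log (p t q.1 q.2)| := abs_sub _ _
          _ ≤ (|r t q.1 q.2| + |∫ s', Vpol T P ν β p r (t + 1) s' ∂(P t q)|)
              + |β * Real.log (p t q.1 q.2)| := by
                gcongr; exact abs_add_le _ _
          _ ≤ Cr + C1 + CL := by
                have := hCr q.1 q.2; have := hPVb q; have := hCL q.1 q.2; gcongr <;> assumption
      have hVeq : Vpol T P ν β p r t = fun s => ∫ a, h (s, a) * p t s a ∂ν := by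
        funext s; rw [Vpol, if_neg hTt]
      constructor
      · rw [hVeq]
        exact (MeasureTheory.StronglyMeasurable.integral_prod_right'
          (f := fun q : S × A => h q * p t q.1 q.2)
          (hhm.mul (hp.1 t)).stronglyMeasurable).measurable
      · refine ⟨Cr + C1 + CL, fun s => ?_⟩
        rw [hVeq]
        have hint : Integrable (fun a => h (s, a) * p t s a) ν :=
          (p_integrable hp t s).bdd_mul (c := Cr + C1 + CL) (hhm.comp measurable_prodMk_left).aestronglyMeasurable
            (Filter.Eventually.of_forall fun a => by simpa [Real.norm_eq_abs] using hhb (s, a))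
        calc |∫ a, h (s, a) * p t s a ∂ν| ≤ ∫ a, |h (s, a)| * |p t s a| ∂ν := by
              simpa [Real.norm_eq_abs, abs_mul] using norm_integral_le_integral_norm
                (fun a => h (s, a) * p t s a) (μ := ν)
          _ ≤ ∫ a, (Cr + C1 + CL) * p t s a ∂ν := by
              refine integral_mono ?_ ((p_integrable hp t s).const_mul _) fun a => ?_
              · simpa [abs_mul] using hint.abs
              · rw [abs_of_nonneg (hp.2.1 t s a)]
                exact mul_le_mul_of_nonneg_right (hhb (s, a)) (hp.2.1 t s a)
          _ = Cr + C1 + CL := by rw [integral_const_mul, hp.2.2 t s, mul_one]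

end Vfacts


lemma abs4_le {x1 x2 x3 x4 C1 C2 C3 C4 : ℝ} (h1 : |x1| ≤ C1) (h2 : |x2| ≤ C2)
    (h3 : |x3| ≤ C3) (h4 : |x4| ≤ C4) : |x1 + x2 - x3 - x4| ≤ C1 + C2 + C3 + C4 := by
  calc |x1 + x2 - x3 - x4| ≤ |x1 + x2 - x3| + |x4| := abs_sub _ _
    _ ≤ (|x1 + x2| + |x3|) + |x4| := by gcongr; exact abs_sub _ _
    _ ≤ ((|x1| + |x2|) + |x3|) + |x4| := by gcongr; exact abs_add_le _ _
    _ ≤ C1 + C2 + C3 + C4 := by gcongr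

section QA

variable {T : ℕ} {P : ℕ → Kernel (S × A) S} [∀ t, IsMarkovKernel (P t)]
  {ν : Measure A} [IsFiniteMeasure ν]
  {β : ℝ} {r p : ℕ → S → A → ℝ}

/-- `PV t q = ∫ s', Vpol (t+1) s' ∂(P t q)` measurable and bounded. -/
lemma PV_meas_bdd (hr : IsBddReward r) (hp : IsPolicyDensity ν p)
    (hL : ∀ t, ∃ C, ∀ s a, |β * Real.log (p t s a)| ≤ C) (t : ℕ) :
    Measurable (fun q : S × A => ∫ s', Vpol T P ν β p r (t + 1) s' ∂(P t q)) ∧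
      ∃ C, ∀ q : S × A, |∫ s', Vpol T P ν β p r (t + 1) s' ∂(P t q)| ≤ C := by
  obtain ⟨hm, C, hC⟩ := Vpol_meas_bdd (T := T) (P := P) hr hp hL (t + 1)
  exact ⟨(MeasureTheory.StronglyMeasurable.integral_kernel_prod_right'
    (hm.comp measurable_snd).stronglyMeasurable).measurable, C,
    fun q => abs_integral_le_of_bdd hC⟩

lemma Apol_eq (t : ℕ) : (fun q : S × A => Apol T P ν β p r t q.1 q.2) = fun q =>
    r t q.1 q.2 + (∫ s', Vpol T P ν β p r (t + 1) s' ∂(P t q))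
      - Vpol T P ν β p r t q.1 - β * Real.log (p t q.1 q.2) := by
  funext q; simp [IRL.Apol, IRL.Qpol]

lemma Apol_meas_bdd (hr : IsBddReward r) (hp : IsPolicyDensity ν p)
    (hL : ∀ t, ∃ C, ∀ s a, |β * Real.log (p t s a)| ≤ C) (t : ℕ) :
    Measurable (fun q : S × A => Apol T P ν β p r t q.1 q.2) ∧
      ∃ C, 0 ≤ C ∧ ∀ q : S × A, |Apol T P ν β p r t q.1 q.2| ≤ C := by
  obtain ⟨hPVm, C1, hC1⟩ := PV_meas_bdd (T := T) (P := P) hr hp hL t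
  obtain ⟨hVm, C2, hC2⟩ := Vpol_meas_bdd (T := T) (P := P) hr hp hL t
  obtain ⟨Cr, hCr⟩ := (hr t).2
  obtain ⟨CL, hCL⟩ := hL t
  constructor
  · rw [Apol_eq]
    exact (((hr t).1.add hPVm).sub (hVm.comp measurable_fst)).sub
      (measurable_const.mul ((hp.1 t).log))
  · refine ⟨|Cr| + |C1| + |C2| + |CL|, by positivity, fun q => ?_⟩
    have := congrFun (Apol_eq (T := T) (P := P) (ν := ν) (β := β) (r := r) (p := p) t) q
    rw [this]
    exact abs4_le ((hCr q.1 q.2).trans (le_abs_self _)) ((hC1 q).trans (le_abs_self _))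
      ((hC2 q.1).trans (le_abs_self _)) ((hCL q.1 q.2).trans (le_abs_self _))

/-- zero conditional mean of the advantage. -/
lemma Apol_int_zero (hr : IsBddReward r) (hp : IsPolicyDensity ν p)
    (hL : ∀ t, ∃ C, ∀ s a, |β * Real.log (p t s a)| ≤ C) {t : ℕ} (htT : t ≤ T) (s : S) :
    ∫ a, Apol T P ν β p r t s a * p t s a ∂ν = 0 := by
  obtain ⟨hPVm, C1, hC1⟩ := PV_meas_bdd (T := T) (P := P) hr hp hL t
  obtain ⟨Cr, hCr⟩ := (hr t).2
  obtain ⟨CL, hCL⟩ := hL t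
  set Qb : A → ℝ := fun a => Qpol T P ν β p r t s a - β * Real.log (p t s a) with hQb
  have hVeq : Vpol T P ν β p r t s = ∫ a, Qb a * p t s a ∂ν := by
    rw [Vpol, if_neg (not_lt.2 htT)]; rfl
  have hQbm : Measurable Qb := by
    have : Qb = fun a => (r t s a + ∫ s', Vpol T P ν β p r (t + 1) s' ∂(P t (s, a)))
        - β * Real.log (p t s a) := rfl
    rw [this]
    exact ((((hr t).1.comp measurable_prodMk_left).add
      (hPVm.comp measurable_prodMk_left)).sub
      (measurable_const.mul ((p_meas hp t s).log)))
  have hQbb : ∀ a, |Qb a| ≤ |Cr| + |C1| + |CL| := fun a => by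
    have : Qb a = r t s a + (∫ s', Vpol T P ν β p r (t + 1) s' ∂(P t (s, a)))
        - β * Real.log (p t s a) := rfl
    rw [this]
    calc |r t s a + (∫ s', Vpol T P ν β p r (t + 1) s' ∂(P t (s, a)))
          - β * Real.log (p t s a)|
        ≤ |r t s a + ∫ s', Vpol T P ν β p r (t + 1) s' ∂(P t (s, a))|
          + |β * Real.log (p t s a)| := abs_sub _ _
      _ ≤ (|r t s a| + |∫ s', Vpol T P ν β p r (t + 1) s' ∂(P t (s, a))|)
          + |β * Real.log (p t s a)| := by gcongr; exact abs_add_le _ _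
      _ ≤ |Cr| + |C1| + |CL| :=
          add_le_add (add_le_add ((hCr s a).trans (le_abs_self _))
            ((hC1 (s, a)).trans (le_abs_self _))) ((hCL s a).trans (le_abs_self _))
  have hint : Integrable (fun a => Qb a * p t s a) ν :=
    (p_integrable hp t s).bdd_mul (c := |Cr| + |C1| + |CL|) hQbm.aestronglyMeasurable
      (Filter.Eventually.of_forall fun a => by simpa [Real.norm_eq_abs] using hQbb a)
  have heq : (fun a => Apol T P ν β p r t s a * p t s a)
      = fun a => Qb a * p t s a - Vpol T P ν β p r t s * p t s a := by
    funext a; simp only [IRL.Apol, hQb]; ring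
  rw [heq, integral_sub hint ((p_integrable hp t s).const_mul _), integral_const_mul,
    hp.2.2 t s, mul_one, ← hVeq, sub_self]

/-- zero conditional mean of the dynamics residual. -/
lemma resid_int_zero {V : S → ℝ} (hm : Measurable V) {C : ℝ} (hb : ∀ s, |V s| ≤ C)
    (μ : Measure S) [IsProbabilityMeasure μ] :
    ∫ s', (V s' - ∫ s'', V s'' ∂μ) ∂μ = 0 := by
  rw [integral_sub (integrable_of_bdd hm hb) (integrable_const _), integral_const]
  simp

end QA


section PolExp

variable [Nonempty S] [Nonempty A]
variable {T : ℕ} {P : ℕ → Kernel (S × A) S} [∀ t, IsMarkovKernel (P t)]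
  {pol : ℕ → Kernel S A}

/-- The junk trajectory. -/
def junk : ℕ → S × A := fun _ => (Classical.arbitrary S, Classical.arbitrary A)

/-- Apply a list of coordinate updates to a trajectory. -/
def updList (l : List (ℕ × (S × A))) (τ : ℕ → S × A) : ℕ → S × A :=
  l.foldr (fun q τ' => Function.update τ' q.1 q.2) τ

lemma updList_nil (τ : ℕ → S × A) : updList [] τ = τ := rfl

lemma updList_append_single (l : List (ℕ × (S × A))) (q : ℕ × (S × A)) (τ : ℕ → S × A) :
    updList (l ++ [q]) τ = updList l (Function.update τ q.1 q.2) := by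
  simp [updList, List.foldr_append]

lemma updList_apply_of_ne {l : List (ℕ × (S × A))} {i : ℕ} (h : ∀ q ∈ l, q.1 ≠ i)
    (τ : ℕ → S × A) : updList l τ i = τ i := by
  induction l with
  | nil => rfl
  | cons q l ih =>
    have : updList (q :: l) τ = Function.update (updList l τ) q.1 q.2 := rfl
    rw [this, Function.update_of_ne (Ne.symm (h q List.mem_cons_self)),
      ih fun q' hq' => h q' (List.mem_cons_of_mem q hq')]

lemma updList_update_comm {l : List (ℕ × (S × A))} {i : ℕ} (h : ∀ q ∈ l, q.1 ≠ i)
    (τ : ℕ → S × A) (x : S × A) :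
    updList l (Function.update τ i x) = Function.update (updList l τ) i x := by
  induction l with
  | nil => rfl
  | cons q l ih =>
    have h1 : ∀ q' ∈ l, q'.1 ≠ i := fun q' hq' => h q' (List.mem_cons_of_mem q hq')
    have : ∀ σ, updList (q :: l) σ = Function.update (updList l σ) q.1 q.2 := fun _ => rfl
    rw [this, this, ih h1, Function.update_comm (h q List.mem_cons_self)]

/-- polExp of a function not depending on coordinates `≥ u` is its value at `junk`. -/
lemma polExp_of_indep (hprob : ∀ t s, IsProbabilityMeasure (pol t s)) :
    ∀ n u (g : (ℕ → S × A) → ℝ), T + 1 - u ≤ n →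
      (∀ τ i x, u ≤ i → g (Function.update τ i x) = g τ) → ∀ s,
      polExp T P pol g u s = g junk := by
  intro n
  induction n with
  | zero =>
    intro u g hu hg s
    rw [polExp, if_pos (by omega)]
    rfl
  | succ n ih =>
    intro u g hu hg s
    by_cases hTu : T < u
    · rw [polExp, if_pos hTu]; rfl
    · rw [polExp, if_neg hTu]
      have key : ∀ a (s' : S),
          polExp T P pol (fun τ => g (Function.update τ u (s, a))) (u + 1) s' = g junk := by
        intro a s'
        rw [ih (u + 1) _ (by omega) ?_ s']
        · exact hg _ u _ le_rfl
        · intro τ i x hi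
          rw [Function.update_comm (by omega : i ≠ u), hg _ i x (by omega)]
      calc ∫ a, ∫ s', polExp T P pol (fun τ => g (Function.update τ u (s, a))) (u + 1) s'
            ∂(P u (s, a)) ∂(pol u s)
          = ∫ a, g junk ∂(pol u s) := by
            refine integral_congr_ae (Filter.Eventually.of_forall fun a => ?_)
            simp only [key, integral_const, measure_univ, ENNReal.toReal_one, probReal_univ, one_smul]
        _ = g junk := by
            have := hprob u s
            simp only [integral_const, measure_univ, ENNReal.toReal_one, probReal_univ, one_smul]

/-- Propagation of a zero conditional mean at time `m` down to time `u ≤ m`. -/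
lemma polExp_zero_propagate {m : ℕ} (hm : m ≤ T)
    (g : (ℕ → S × A) → ℝ)
    (H : ∀ l : List (ℕ × (S × A)), (∀ q ∈ l, q.1 < m) → ∀ s,
      polExp T P pol (fun τ => g (updList l τ)) m s = 0) :
    ∀ k u, u + k = m → ∀ l : List (ℕ × (S × A)), (∀ q ∈ l, q.1 < u) → ∀ s,
      polExp T P pol (fun τ => g (updList l τ)) u s = 0 := by
  intro k
  induction k with
  | zero =>
    intro u hu l hl s
    have : u = m := by omega
    subst this
    exact H l hl s
  | succ k ih =>
    intro u hu l hl s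
    have hTu : ¬ T < u := by omega
    rw [polExp, if_neg hTu]
    have key : ∀ a (s' : S),
        polExp T P pol (fun τ => g (updList l (Function.update τ u (s, a)))) (u + 1) s' = 0 := by
      intro a s'
      have heq : (fun τ => g (updList l (Function.update τ u (s, a))))
          = fun τ => g (updList (l ++ [(u, (s, a))]) τ) := by
        funext τ; rw [updList_append_single]
      rw [heq]
      exact ih (u + 1) (by omega) (l ++ [(u, (s, a))]) (by
        intro q hq
        rcases List.mem_append.mp hq with h | h
        · exact lt_of_lt_of_le (hl q h) (by omega)
        · rw [List.mem_singleton] at h; subst h; exact Nat.lt_succ_self u) s'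
    calc ∫ a, ∫ s', polExp T P pol
          (fun τ => g (updList l (Function.update τ u (s, a)))) (u + 1) s'
          ∂(P u (s, a)) ∂(pol u s)
        = ∫ a, (0 : ℝ) ∂(pol u s) := by
          refine integral_congr_ae (Filter.Eventually.of_forall fun a => ?_)
          simp only [key, integral_zero]
      _ = 0 := integral_zero _ _

end PolExp


section Masters

variable [Nonempty S] [Nonempty A]
variable {T : ℕ} {P : ℕ → Kernel (S × A) S} [∀ t, IsMarkovKernel (P t)]
  {pol : ℕ → Kernel S A}

/-- Master lemma 1: products resolved by the zero-mean of `φ` over the policy at time `m`. -/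
lemma master1 (hprob : ∀ t s, IsProbabilityMeasure (pol t s)) {m : ℕ} (hm1 : 1 ≤ m)
    (hmT : m ≤ T) (φ : S × A → ℝ) (hφ : ∀ s : S, ∫ a, φ (s, a) ∂(pol m s) = 0)
    (F : (ℕ → S × A) → ℝ)
    (hF1 : ∀ τ i x, m < i → F (Function.update τ i x) = F τ)
    (hF2 : ∀ τ (s : S) (a a' : A),
      F (Function.update τ m (s, a)) = F (Function.update τ m (s, a'))) (s : S) :
    polExp T P pol (fun τ => F τ * φ (τ m)) 1 s = 0 := by
  set g : (ℕ → S × A) → ℝ := fun τ => F τ * φ (τ m) with hg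
  have H : ∀ l : List (ℕ × (S × A)), (∀ q ∈ l, q.1 < m) → ∀ s0 : S,
      polExp T P pol (fun τ => g (updList l τ)) m s0 = 0 := by
    intro l hl s0
    have hlne : ∀ q ∈ l, q.1 ≠ m := fun q hq => by have := hl q hq; omega
    rw [polExp, if_neg (not_lt.2 hmT)]
    have key : ∀ (a : A) (s' : S),
        polExp T P pol (fun τ => g (updList l (Function.update τ m (s0, a)))) (m + 1) s'
        = F (Function.update (updList l junk) m (s0, Classical.arbitrary A)) * φ (s0, a) := by
      intro a s'
      have heq : (fun τ => g (updList l (Function.update τ m (s0, a))))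
          = fun τ => F (Function.update (updList l τ) m (s0, a)) * φ (s0, a) := by
        funext τ
        rw [hg]
        simp only [updList_update_comm hlne, Function.update_self]
      have hind : ∀ (τ : ℕ → S × A) (i : ℕ) (x : S × A), m + 1 ≤ i →
          F (Function.update (updList l (Function.update τ i x)) m (s0, a)) * φ (s0, a)
          = F (Function.update (updList l τ) m (s0, a)) * φ (s0, a) := by
        intro τ i x hi
        rw [updList_update_comm (fun q hq => show q.1 ≠ i by have := hl q hq; omega),
          Function.update_comm (show i ≠ m by omega), hF1 _ i x (by omega)]
      rw [heq, polExp_of_indep hprob (T + 1) (m + 1) _ (by omega) hind s']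
      exact congrArg (fun z => z * φ (s0, a)) (hF2 (updList l junk) s0 a (Classical.arbitrary A))
    calc ∫ a, ∫ s', polExp T P pol
          (fun τ => g (updList l (Function.update τ m (s0, a)))) (m + 1) s'
          ∂(P m (s0, a)) ∂(pol m s0)
        = ∫ a, F (Function.update (updList l junk) m (s0, Classical.arbitrary A)) * φ (s0, a)
            ∂(pol m s0) := by
          refine integral_congr_ae (Filter.Eventually.of_forall fun a => ?_)
          simp only [key, integral_const, measure_univ, ENNReal.toReal_one, probReal_univ, one_smul]
      _ = 0 := by rw [integral_const_mul, hφ s0, mul_zero]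
  have h := polExp_zero_propagate hmT g H (m - 1) 1 (by omega) List.nil (by simp) s
  simpa only [updList_nil] using h

/-- Master lemma 2: products resolved by the zero-mean of the dynamics residual at time `m`. -/
lemma master2 (hprob : ∀ t s, IsProbabilityMeasure (pol t s)) {m : ℕ} (hm1 : 1 ≤ m)
    (hmT : m < T) (V : S → ℝ) (hVm : Measurable V) {CV : ℝ} (hVb : ∀ s, |V s| ≤ CV)
    (c : S × A → ℝ) (hc : ∀ q, c q = ∫ s', V s' ∂(P m q))
    (F : (ℕ → S × A) → ℝ)
    (hF1 : ∀ τ i x, m < i → F (Function.update τ i x) = F τ) (s : S) :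
    polExp T P pol (fun τ => F τ * (V ((τ (m + 1)).1) - c (τ m))) 1 s = 0 := by
  set g : (ℕ → S × A) → ℝ := fun τ => F τ * (V ((τ (m + 1)).1) - c (τ m)) with hg
  have H : ∀ l : List (ℕ × (S × A)), (∀ q ∈ l, q.1 < m) → ∀ s0 : S,
      polExp T P pol (fun τ => g (updList l τ)) m s0 = 0 := by
    intro l hl s0
    have hlne : ∀ q ∈ l, q.1 ≠ m := fun q hq => by have := hl q hq; omega
    have hlne' : ∀ q ∈ l, q.1 ≠ m + 1 := fun q hq => by have := hl q hq; omega
    rw [polExp, if_neg (by omega : ¬ T < m)]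
    have key : ∀ (a : A) (s' : S),
        polExp T P pol (fun τ => g (updList l (Function.update τ m (s0, a)))) (m + 1) s'
        = F (Function.update (updList l junk) m (s0, a)) * (V s' - c (s0, a)) := by
      intro a s'
      have heq : (fun τ => g (updList l (Function.update τ m (s0, a))))
          = fun τ => F (updList l (Function.update τ m (s0, a)))
              * (V ((τ (m + 1)).1) - c (s0, a)) := by
        funext τ
        have h1 : (updList l (Function.update τ m (s0, a))) m = (s0, a) := by
          rw [updList_apply_of_ne hlne, Function.update_self]
        have h2 : (updList l (Function.update τ m (s0, a))) (m + 1) = τ (m + 1) := by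
          rw [updList_apply_of_ne hlne', Function.update_of_ne (by omega)]
        rw [hg]
        simp only [h1, h2]
      rw [heq, polExp, if_neg (by omega : ¬ T < m + 1)]
      have key2 : ∀ (a' : A) (s'' : S),
          polExp T P pol (fun τ => F (updList l (Function.update
              (Function.update τ (m + 1) (s', a')) m (s0, a)))
            * (V (((Function.update τ (m + 1) (s', a')) (m + 1)).1) - c (s0, a))) (m + 2) s''
          = F (Function.update (updList l junk) m (s0, a)) * (V s' - c (s0, a)) := by
        intro a' s''
        have heq2 : (fun τ => F (updList l (Function.update
              (Function.update τ (m + 1) (s', a')) m (s0, a)))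
            * (V (((Function.update τ (m + 1) (s', a')) (m + 1)).1) - c (s0, a)))
            = fun τ => F (updList l (Function.update
              (Function.update τ (m + 1) (s', a')) m (s0, a))) * (V s' - c (s0, a)) := by
          funext τ
          rw [Function.update_self]
        have hind2 : ∀ (τ : ℕ → S × A) (i : ℕ) (x : S × A), m + 2 ≤ i →
            F (updList l (Function.update (Function.update (Function.update τ i x)
                (m + 1) (s', a')) m (s0, a))) * (V s' - c (s0, a))
            = F (updList l (Function.update (Function.update τ (m + 1) (s', a'))
                m (s0, a))) * (V s' - c (s0, a)) := by
          intro τ i x hi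
          rw [Function.update_comm (show i ≠ m + 1 by omega),
            Function.update_comm (show i ≠ m by omega),
            updList_update_comm (fun q hq => show q.1 ≠ i by have := hl q hq; omega),
            hF1 _ i x (by omega)]
        rw [heq2, polExp_of_indep hprob (T + 1) (m + 2) _ (by omega) hind2 s'']
        have harg : updList l (Function.update (Function.update junk (m + 1) (s', a'))
              m (s0, a))
            = Function.update (Function.update (updList l junk) m (s0, a)) (m + 1)
              (s', a') := by
          rw [Function.update_comm (show m + 1 ≠ m by omega),
            updList_update_comm hlne', updList_update_comm hlne]
        exact congrArg (fun z => z * (V s' - c (s0, a)))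
          (by rw [harg]; exact hF1 _ (m + 1) _ (by omega))
      calc ∫ a', ∫ s'', polExp T P pol (fun τ => (fun τ => F (updList l
              (Function.update τ m (s0, a))) * (V ((τ (m + 1)).1) - c (s0, a)))
              (Function.update τ (m + 1) (s', a'))) (m + 2) s''
            ∂(P (m + 1) (s', a')) ∂(pol (m + 1) s')
          = ∫ a', F (Function.update (updList l junk) m (s0, a)) * (V s' - c (s0, a))
              ∂(pol (m + 1) s') := by
            refine integral_congr_ae (Filter.Eventually.of_forall fun a' => ?_)
            simp only [key2, integral_const, measure_univ, ENNReal.toReal_one, probReal_univ, one_smul]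
        _ = F (Function.update (updList l junk) m (s0, a)) * (V s' - c (s0, a)) := by
            have := hprob (m + 1) s'
            simp only [integral_const, measure_univ, ENNReal.toReal_one, probReal_univ, one_smul]
    calc ∫ a, ∫ s', polExp T P pol
          (fun τ => g (updList l (Function.update τ m (s0, a)))) (m + 1) s'
          ∂(P m (s0, a)) ∂(pol m s0)
        = ∫ a, (0 : ℝ) ∂(pol m s0) := by
          refine integral_congr_ae (Filter.Eventually.of_forall fun a => ?_)
          have hint : Integrable V (P m (s0, a)) := integrable_of_bdd hVm hVb
          calc ∫ s', polExp T P pol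
                (fun τ => g (updList l (Function.update τ m (s0, a)))) (m + 1) s'
                ∂(P m (s0, a))
              = ∫ s', F (Function.update (updList l junk) m (s0, a)) * (V s' - c (s0, a))
                  ∂(P m (s0, a)) := by
                refine integral_congr_ae (Filter.Eventually.of_forall fun s' => ?_)
                rw [key a s']
            _ = F (Function.update (updList l junk) m (s0, a))
                  * ((∫ s', V s' ∂(P m (s0, a))) - c (s0, a)) := by
                rw [integral_const_mul, integral_sub hint (integrable_const _), integral_const]
                simp
            _ = 0 := by rw [hc (s0, a), sub_self, mul_zero]
      _ = 0 := integral_zero _ _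
  have h := polExp_zero_propagate (le_of_lt hmT) g H (m - 1) 1 (by omega) List.nil (by simp) s
  simpa only [updList_nil] using h

end Masters

end IRLAux


open MeasureTheory ProbabilityTheory Real
open scoped ENNReal

/-- **Orthogonal return decomposition** (Lemma `return_decomp`). For `β ≥ 0`, a bounded
measurable reward `r` and Markov policies `π, π′` with `ν`-densities (with bounded
log-densities when `β > 0`): (1) the centered regularized return decomposes pointwise into
advantage terms and dynamics residuals; (2) the advantages have zero conditional mean under
`π` and the residuals have zero conditional mean under the dynamics; (3) the `2T` random
variables `A^π_{1,r},…,A^π_{T,r}, δ^{π′}_{0,r},…,δ^{π′}_{T−1,r}` are pairwise orthogonal in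
`L²(P^π)`. -/
theorem orthogonal_return_decomposition
    {S A : Type*} [MeasurableSpace S] [MeasurableSpace A] [Nonempty S] [Nonempty A]
    (T : ℕ) (hT : 1 ≤ T)
    (P0 : Measure S) [IsProbabilityMeasure P0]
    (P : ℕ → Kernel (S × A) S) [∀ t, IsMarkovKernel (P t)]
    (ν : Measure A) [IsFiniteMeasure ν] (hν : ν Set.univ ≠ 0)
    (β : ℝ) (hβ : 0 ≤ β)
    (r : ℕ → S → A → ℝ) (hr : IRL.IsBddReward r)
    (p : ℕ → S → A → ℝ) (hp : IRL.IsPolicyDensity ν p)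
    (hlog : 0 < β → IRL.HasBddLogDensity p)
    (p' : ℕ → S → A → ℝ) (hp' : IRL.IsPolicyDensity ν p')
    (hlog' : 0 < β → IRL.HasBddLogDensity p')
    (Ppi : Measure (ℕ → S × A)) (hPpi : IRL.IsTrajLaw T P P0 (IRL.densKernel ν p) Ppi)
    -- the regularized return `G^π_r`
    (G : (ℕ → S × A) → ℝ)
    (hG : G = fun τ => ∑ t ∈ Finset.Icc 1 T,
      (r t (τ t).1 (τ t).2 - β * Real.log (p t (τ t).1 (τ t).2)))
    -- the advantage terms `A^π_{t,r}(s_t,a_t)`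
    (X : ℕ → (ℕ → S × A) → ℝ)
    (hX : X = fun t τ => IRL.Apol T P ν β p r t (τ t).1 (τ t).2)
    -- the dynamics residuals `δ^{π′}_{t,r}` (index `0` uses the initial distribution)
    (Y : ℕ → (ℕ → S × A) → ℝ)
    (hY : Y = fun t τ =>
      if t = 0 then IRL.Vpol T P ν β p' r 1 (τ 1).1 - IRL.Jpol T P ν P0 β p' r
      else IRL.Vpol T P ν β p' r (t + 1) (τ (t + 1)).1
        - ∫ s', IRL.Vpol T P ν β p' r (t + 1) s' ∂(P t ((τ t).1, (τ t).2)))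
    -- residuals for `π` itself (used in the pointwise decomposition)
    (Yp : ℕ → (ℕ → S × A) → ℝ)
    (hYp : Yp = fun t τ =>
      if t = 0 then IRL.Vpol T P ν β p r 1 (τ 1).1 - IRL.Jpol T P ν P0 β p r
      else IRL.Vpol T P ν β p r (t + 1) (τ (t + 1)).1
        - ∫ s', IRL.Vpol T P ν β p r (t + 1) s' ∂(P t ((τ t).1, (τ t).2))) :
    -- (1) pointwise decomposition of the centered return
    (∀ τ : ℕ → S × A,
      G τ - IRL.Jpol T P ν P0 β p r
        = (∑ t ∈ Finset.Icc 1 T, X t τ) + ∑ t ∈ Finset.range T, Yp t τ) ∧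
    -- (2) zero conditional means
    (∀ t, 1 ≤ t → t ≤ T → ∀ s : S, ∫ a, IRL.Apol T P ν β p r t s a * p t s a ∂ν = 0) ∧
    (∀ t, 1 ≤ t → t ≤ T - 1 → ∀ s a,
      ∫ s', (IRL.Vpol T P ν β p' r (t + 1) s'
          - ∫ s'', IRL.Vpol T P ν β p' r (t + 1) s'' ∂(P t (s, a))) ∂(P t (s, a)) = 0) ∧
    -- (3) pairwise orthogonality in `L²(P^π)`
    (∀ t ∈ Finset.Icc 1 T, ∀ t' ∈ Finset.Icc 1 T, t ≠ t' →
      ∫ τ, X t τ * X t' τ ∂Ppi = 0) ∧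
    (∀ t ∈ Finset.Icc 1 T, ∀ t' ∈ Finset.range T, ∫ τ, X t τ * Y t' τ ∂Ppi = 0) ∧
    (∀ t ∈ Finset.range T, ∀ t' ∈ Finset.range T, t ≠ t' →
      ∫ τ, Y t τ * Y t' τ ∂Ppi = 0) := by
      classical
  -- abbreviations for the explicit forms of `G, X, Y, Yp`
  have hXt : ∀ t, X t = fun τ => IRL.Apol T P ν β p r t (τ t).1 (τ t).2 := fun t => by rw [hX]
  have hY0 : Y 0 = fun τ => IRL.Vpol T P ν β p' r 1 (τ 1).1 - IRL.Jpol T P ν P0 β p' r := by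
    rw [hY]; simp
  have hYpos : ∀ t', t' ≠ 0 → Y t' = fun τ =>
      IRL.Vpol T P ν β p' r (t' + 1) (τ (t' + 1)).1
        - ∫ s', IRL.Vpol T P ν β p' r (t' + 1) s' ∂(P t' ((τ t').1, (τ t').2)) := by
    intro t' h0; rw [hY]; simp only [if_neg h0]
  have hYp0 : Yp 0 = fun τ => IRL.Vpol T P ν β p r 1 (τ 1).1 - IRL.Jpol T P ν P0 β p r := by
    rw [hYp]; simp
  have hYppos : ∀ t', t' ≠ 0 → Yp t' = fun τ =>
      IRL.Vpol T P ν β p r (t' + 1) (τ (t' + 1)).1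
        - ∫ s', IRL.Vpol T P ν β p r (t' + 1) s' ∂(P t' ((τ t').1, (τ t').2)) := by
    intro t' h0; rw [hYp]; simp only [if_neg h0]
  -- basic analytic facts
  have hLp := IRLAux.log_term_bdd hβ hlog
  have hLp' := IRLAux.log_term_bdd hβ hlog'
  have hprob : ∀ t s, IsProbabilityMeasure (IRL.densKernel ν p t s) :=
    fun t s => IRLAux.densKernel_prob hp t s
  have hA := fun t => IRLAux.Apol_meas_bdd (T := T) (P := P) hr hp hLp t
  have hVp := fun t => IRLAux.Vpol_meas_bdd (T := T) (P := P) hr hp hLp t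
  have hVp' := fun t => IRLAux.Vpol_meas_bdd (T := T) (P := P) hr hp' hLp' t
  have hPVp' := fun t => IRLAux.PV_meas_bdd (T := T) (P := P) hr hp' hLp' t
  -- zero conditional mean of the advantage, under the density kernel
  have hAzero : ∀ {m}, m ≤ T → ∀ s : S,
      ∫ a, IRL.Apol T P ν β p r m s a * p m s a ∂ν = 0 :=
    fun {m} hm s => IRLAux.Apol_int_zero hr hp hLp hm s
  have hφ : ∀ {m}, m ≤ T → ∀ s : S,
      ∫ a, IRL.Apol T P ν β p r m s a ∂(IRL.densKernel ν p m s) = 0 := by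
    intro m hm s
    rw [IRLAux.integral_densKernel hp]
    calc ∫ a, p m s a * IRL.Apol T P ν β p r m s a ∂ν
        = ∫ a, IRL.Apol T P ν β p r m s a * p m s a ∂ν :=
          integral_congr_ae (Filter.Eventually.of_forall fun a => mul_comm _ _)
      _ = 0 := hAzero hm s
  -- reduction of integrals over the trajectory law to `polExp`
  have key : ∀ g : (ℕ → S × A) → ℝ, Measurable g → (∃ C, ∀ τ, |g τ| ≤ C) →
      (∀ s, IRL.polExp T P (IRL.densKernel ν p) g 1 s = 0) → ∫ τ, g τ ∂Ppi = 0 := by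
    intro g hm hb hz
    rw [hPpi.2 g hm (by obtain ⟨C, hC⟩ := hb; exact ⟨C, hC⟩)]
    simp only [hz, integral_zero]
  -- measurability and bounds for X and Y
  have hXmeas : ∀ t, Measurable (X t) := fun t => by
    rw [hXt t]; exact (hA t).1.comp (measurable_pi_apply t)
  have hXbd : ∀ t, ∃ C, 0 ≤ C ∧ ∀ τ, |X t τ| ≤ C := fun t => by
    obtain ⟨C, hC0, hC⟩ := (hA t).2
    exact ⟨C, hC0, fun τ => by rw [hXt t]; exact hC (τ t)⟩
  have hYmb : ∀ t', Measurable (Y t') ∧ ∃ C, 0 ≤ C ∧ ∀ τ, |Y t' τ| ≤ C := by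
    intro t'
    by_cases h0 : t' = 0
    · subst h0
      rw [hY0]
      obtain ⟨hm1, C, hC⟩ := hVp' 1
      have hC0 : 0 ≤ C := (abs_nonneg _).trans (hC (Classical.arbitrary S))
      constructor
      · exact (hm1.comp (measurable_fst.comp (measurable_pi_apply 1))).sub measurable_const
      · refine ⟨C + |IRL.Jpol T P ν P0 β p' r|, by positivity, fun τ => ?_⟩
        exact (abs_sub _ _).trans (add_le_add (hC _) le_rfl)
    · rw [hYpos t' h0]
      obtain ⟨hm1, C1, hC1⟩ := hVp' (t' + 1)
      obtain ⟨hm2, C2, hC2⟩ := hPVp' t'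
      have hC10 : 0 ≤ C1 := (abs_nonneg _).trans (hC1 (Classical.arbitrary S))
      have hC20 : 0 ≤ C2 :=
        (abs_nonneg _).trans (hC2 (Classical.arbitrary S, Classical.arbitrary A))
      constructor
      · exact (hm1.comp (measurable_fst.comp (measurable_pi_apply (t' + 1)))).sub
          (hm2.comp (measurable_pi_apply t'))
      · refine ⟨C1 + C2, by positivity, fun τ => ?_⟩
        exact (abs_sub _ _).trans (add_le_add (hC1 _) (hC2 (τ t')))
  -- invariance of X and Y under irrelevant coordinate updates
  have hXupd : ∀ t i (x : S × A) τ, i ≠ t → X t (Function.update τ i x) = X t τ := by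
    intro t i x τ h
    rw [hXt t]
    simp only [Function.update_of_ne (show t ≠ i from fun hh => h hh.symm)]
  have hYupd : ∀ t' i (x : S × A) τ, i ≠ t' → i ≠ t' + 1 →
      Y t' (Function.update τ i x) = Y t' τ := by
    intro t' i x τ h1 h2
    by_cases h0 : t' = 0
    · subst h0
      rw [hY0]
      simp only [Function.update_of_ne (show (1 : ℕ) ≠ i from fun hh => h2 hh.symm)]
    · rw [hYpos t' h0]
      simp only [Function.update_of_ne (show t' + 1 ≠ i from fun hh => h2 hh.symm),
        Function.update_of_ne (show t' ≠ i from fun hh => h1 hh.symm)]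
  have hYupd1 : ∀ t' (s : S) (a a' : A) τ,
      Y t' (Function.update τ (t' + 1) (s, a)) = Y t' (Function.update τ (t' + 1) (s, a')) := by
    intro t' s a a' τ
    by_cases h0 : t' = 0
    · subst h0
      rw [hY0]
      simp only [Function.update_self]
    · rw [hYpos t' h0]
      simp only [Function.update_self,
        Function.update_of_ne (show t' ≠ t' + 1 by omega)]
  -- product bound helper
  have hprod : ∀ (f g : (ℕ → S × A) → ℝ),
      (∃ C, 0 ≤ C ∧ ∀ τ, |f τ| ≤ C) → (∃ C, 0 ≤ C ∧ ∀ τ, |g τ| ≤ C) →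
      ∃ C, ∀ τ, |f τ * g τ| ≤ C := by
    rintro f g ⟨C1, hC10, h1⟩ ⟨C2, hC20, h2⟩
    exact ⟨C1 * C2, fun τ => by
      rw [abs_mul]
      exact mul_le_mul (h1 τ) (h2 τ) (abs_nonneg _) hC10⟩
  refine ⟨?_, ?_, ?_, ?_, ?_, ?_⟩
  · -- (1) pointwise decomposition
    intro τ
    have hVT1 : ∀ s, IRL.Vpol T P ν β p r (T + 1) s = 0 := fun s => by
      rw [IRL.Vpol, if_pos (by omega)]
    have hYpT : Yp T τ = 0 := by
      rw [hYppos T (by omega)]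
      simp [hVT1]
    have hXYp : ∀ i, X (i + 1) τ + Yp (i + 1) τ =
        (r (i + 1) (τ (i + 1)).1 (τ (i + 1)).2
            - β * Real.log (p (i + 1) (τ (i + 1)).1 (τ (i + 1)).2))
          + (IRL.Vpol T P ν β p r (i + 1 + 1) (τ (i + 1 + 1)).1
              - IRL.Vpol T P ν β p r (i + 1) (τ (i + 1)).1) := by
      intro i
      rw [hXt (i + 1), hYppos (i + 1) (by omega)]
      simp only [IRL.Apol, IRL.Qpol]
      ring
    have hsum1 : ∑ t ∈ Finset.Icc 1 T, X t τ = ∑ i ∈ Finset.range T, X (i + 1) τ := by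
      rw [← Finset.Ico_add_one_right_eq_Icc, Finset.sum_Ico_eq_sum_range]
      exact Finset.sum_congr rfl fun i _ => by rw [Nat.add_comm 1 i]
    have hsum2 : ∑ t ∈ Finset.range T, Yp t τ
        = Yp 0 τ + ∑ i ∈ Finset.range T, Yp (i + 1) τ := by
      obtain ⟨T', rfl⟩ : ∃ T', T = T' + 1 := ⟨T - 1, by omega⟩
      rw [Finset.sum_range_succ' (fun t => Yp t τ) T',
        Finset.sum_range_succ (fun i => Yp (i + 1) τ) T', hYpT]
      ring
    have hGτ : G τ = ∑ i ∈ Finset.range T,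
        (r (i + 1) (τ (i + 1)).1 (τ (i + 1)).2
          - β * Real.log (p (i + 1) (τ (i + 1)).1 (τ (i + 1)).2)) := by
      simp only [hG]
      rw [← Finset.Ico_add_one_right_eq_Icc, Finset.sum_Ico_eq_sum_range]
      exact Finset.sum_congr rfl fun i _ => by rw [Nat.add_comm 1 i]
    have e1 : ∑ i ∈ Finset.range T, (X (i + 1) τ + Yp (i + 1) τ)
        = (∑ i ∈ Finset.range T,
            (r (i + 1) (τ (i + 1)).1 (τ (i + 1)).2
              - β * Real.log (p (i + 1) (τ (i + 1)).1 (τ (i + 1)).2)))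
          + (IRL.Vpol T P ν β p r (T + 1) (τ (T + 1)).1
              - IRL.Vpol T P ν β p r (0 + 1) (τ (0 + 1)).1) := by
      rw [Finset.sum_congr rfl fun i _ => hXYp i, Finset.sum_add_distrib,
        Finset.sum_range_sub (fun j => IRL.Vpol T P ν β p r (j + 1) (τ (j + 1)).1) T]
    have e2 : ∑ i ∈ Finset.range T, X (i + 1) τ + ∑ i ∈ Finset.range T, Yp (i + 1) τ
        = ∑ i ∈ Finset.range T, (X (i + 1) τ + Yp (i + 1) τ) :=
      (Finset.sum_add_distrib).symm
    have e3 : Yp 0 τ = IRL.Vpol T P ν β p r 1 (τ 1).1 - IRL.Jpol T P ν P0 β p r := by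
      rw [hYp0]
    have e4 : IRL.Vpol T P ν β p r (T + 1) (τ (T + 1)).1 = 0 := hVT1 _
    have e5 : IRL.Vpol T P ν β p r (0 + 1) (τ (0 + 1)).1
        = IRL.Vpol T P ν β p r 1 (τ 1).1 := rfl
    rw [hGτ, hsum1, hsum2]
    rw [e4, e5] at e1
    linarith [e1, e2, e3]
  · -- (2a)
    exact fun t _ htT s => hAzero htT s
  · -- (2b)
    intro t _ _ s a
    obtain ⟨hm1, C, hC⟩ := hVp' (t + 1)
    exact IRLAux.resid_int_zero hm1 hC (P t (s, a))
  · -- (3) X ⊥ X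
    have main : ∀ t t', 1 ≤ t → t' ≤ T → t < t' → ∫ τ, X t τ * X t' τ ∂Ppi = 0 := by
      intro t t' h1 h2 hlt
      refine key _ ((hXmeas t).mul (hXmeas t')) (hprod _ _ (hXbd t) (hXbd t')) ?_
      intro s
      have hres := IRLAux.master1 (T := T) (P := P) hprob (show 1 ≤ t' by omega) h2
        (fun q : S × A => IRL.Apol T P ν β p r t' q.1 q.2) (fun s0 => hφ h2 s0)
        (X t) (fun τ i x hi => hXupd t i x τ (by omega))
        (fun τ s0 a a' => by
          rw [hXupd t t' (s0, a) τ (by omega), hXupd t t' (s0, a') τ (by omega)]) s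
      have hfun : (fun τ => X t τ * X t' τ)
          = fun τ => X t τ * IRL.Apol T P ν β p r t' (τ t').1 (τ t').2 := by
        funext τ; rw [hXt t']
      rw [hfun]
      exact hres
    intro t ht t' ht' hne
    obtain ⟨ht1, htT⟩ := Finset.mem_Icc.mp ht
    obtain ⟨ht'1, ht'T⟩ := Finset.mem_Icc.mp ht'
    rcases hne.lt_or_gt with h | h
    · exact main t t' ht1 ht'T h
    · calc ∫ τ, X t τ * X t' τ ∂Ppi = ∫ τ, X t' τ * X t τ ∂Ppi :=
            integral_congr_ae (Filter.Eventually.of_forall fun τ => mul_comm _ _)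
        _ = 0 := main t' t ht'1 htT h
  · -- (3) X ⊥ Y
    intro t ht t' ht'
    obtain ⟨ht1, htT⟩ := Finset.mem_Icc.mp ht
    have ht'T : t' < T := Finset.mem_range.mp ht'
    by_cases hlt : t' < t
    · -- resolve X at time t; Y t' is the fixed factor
      refine key _ ((hXmeas t).mul (hYmb t').1) (hprod _ _ (hXbd t) (hYmb t').2) ?_
      intro s
      have hF2 : ∀ τ (s0 : S) (a a' : A), Y t' (Function.update τ t (s0, a))
          = Y t' (Function.update τ t (s0, a')) := by
        intro τ s0 a a'
        by_cases hc : t' + 1 = t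
        · subst hc
          exact hYupd1 t' s0 a a' τ
        · rw [hYupd t' t (s0, a) τ (by omega) (by omega),
            hYupd t' t (s0, a') τ (by omega) (by omega)]
      have hres := IRLAux.master1 (T := T) (P := P) hprob ht1 htT
        (fun q : S × A => IRL.Apol T P ν β p r t q.1 q.2) (fun s0 => hφ htT s0)
        (Y t') (fun τ i x hi => hYupd t' i x τ (by omega) (by omega)) hF2 s
      have hfun : (fun τ => X t τ * Y t' τ)
          = fun τ => Y t' τ * IRL.Apol T P ν β p r t (τ t).1 (τ t).2 := by
        funext τ; rw [hXt t]; exact mul_comm _ _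
      rw [hfun]
      exact hres
    · -- t ≤ t' : resolve Y at time t'
      have h1t' : 1 ≤ t' := le_trans ht1 (not_lt.mp hlt)
      refine key _ ((hXmeas t).mul (hYmb t').1) (hprod _ _ (hXbd t) (hYmb t').2) ?_
      intro s
      obtain ⟨hm1, C1, hC1⟩ := hVp' (t' + 1)
      have hres := IRLAux.master2 (T := T) (P := P) hprob h1t' ht'T
        (IRL.Vpol T P ν β p' r (t' + 1)) hm1 hC1
        (fun q => ∫ s', IRL.Vpol T P ν β p' r (t' + 1) s' ∂(P t' q)) (fun q => rfl)
        (X t) (fun τ i x hi => hXupd t i x τ (by omega)) s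
      have hfun : (fun τ => X t τ * Y t' τ)
          = fun τ => X t τ * (IRL.Vpol T P ν β p' r (t' + 1) (τ (t' + 1)).1
              - ∫ s', IRL.Vpol T P ν β p' r (t' + 1) s' ∂(P t' ((τ t').1, (τ t').2))) := by
        funext τ; rw [hYpos t' (by omega)]
      rw [hfun]
      exact hres
  · -- (3) Y ⊥ Y
    have main : ∀ t t', t' < T → t < t' → ∫ τ, Y t τ * Y t' τ ∂Ppi = 0 := by
      intro t t' h2 hlt
      refine key _ ((hYmb t).1.mul (hYmb t').1) (hprod _ _ (hYmb t).2 (hYmb t').2) ?_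
      intro s
      obtain ⟨hm1, C1, hC1⟩ := hVp' (t' + 1)
      have hres := IRLAux.master2 (T := T) (P := P) hprob (show 1 ≤ t' by omega) h2
        (IRL.Vpol T P ν β p' r (t' + 1)) hm1 hC1
        (fun q => ∫ s', IRL.Vpol T P ν β p' r (t' + 1) s' ∂(P t' q)) (fun q => rfl)
        (Y t) (fun τ i x hi => hYupd t i x τ (by omega) (by omega)) s
      have hfun : (fun τ => Y t τ * Y t' τ)
          = fun τ => Y t τ * (IRL.Vpol T P ν β p' r (t' + 1) (τ (t' + 1)).1
              - ∫ s', IRL.Vpol T P ν β p' r (t' + 1) s' ∂(P t' ((τ t').1, (τ t').2))) := by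
        funext τ; rw [hYpos t' (by omega)]
      rw [hfun]
      exact hres
    intro t ht t' ht' hne
    have htT := Finset.mem_range.mp ht
    have ht'T := Finset.mem_range.mp ht'
    rcases hne.lt_or_gt with h | h
    · exact main t t' ht'T h
    · calc ∫ τ, Y t τ * Y t' τ ∂Ppi = ∫ τ, Y t' τ * Y t τ ∂Ppi :=
            integral_congr_ae (Filter.Eventually.of_forall fun τ => mul_comm _ _)
        _ = 0 := main t' t htT h
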